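/- arXiv:0907.3332 — 3 statements merged into one kernel-verified Lean document; each statement's English description precedes it below -/
import Mathlib

section
/- Let F ⊆ G be prime lattice filters of an MV-algebra L. Then F ⊆ J_d(G, K(F)). -/
/-- An MV-algebra: a commutative monoid `(L, ⊕, 0)` with a unary `¬` satisfying
`¬¬x = x`, `x ⊕ ¬0 = ¬0` and `¬(¬x ⊕ y) ⊕ y = ¬(¬y ⊕ x) ⊕ x`. -/
class MV (L : Type*) where
  add : L → L → L
  zero : L
  neg : L → L
  add_assoc : ∀ x y z : L, add (add x y) z = add x (add y z)
  add_comm : ∀ x y : L, add x y = add y x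
  add_zero : ∀ x : L, add x zero = x
  neg_neg : ∀ x : L, neg (neg x) = x
  add_neg_zero : ∀ x : L, add x (neg zero) = neg zero
  luk : ∀ x y : L, add (neg (add (neg x) y)) y = add (neg (add (neg y) x)) x

namespace MV

variable {L : Type*} [MV L]

/-- `1 = ¬0`. -/
def one : L := neg zero

/-- `x → y = ¬x ⊕ y`. -/
def imp (x y : L) : L := add (neg x) y

/-- `x ⊗ y = ¬(¬x ⊕ ¬y)`. -/
def otimes (x y : L) : L := neg (add (neg x) (neg y))

/-- `x ∨ y = (x → y) → y`. -/
def join (x y : L) : L := imp (imp x y) y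

/-- `x ∧ y = ¬(¬x ∨ ¬y)`. -/
def meet (x y : L) : L := neg (join (neg x) (neg y))

/-- `x ≤ y` iff `x → y = 1`. -/
def le (x y : L) : Prop := imp x y = one

/-- `x < y` iff `x ≤ y` and `x ≠ y`. -/
def lt (x y : L) : Prop := le x y ∧ x ≠ y

/-- A lattice filter: nonempty, upward closed, closed under `∧`. -/
def IsLatticeFilter (F : Set L) : Prop :=
  F.Nonempty ∧ (∀ x y : L, x ∈ F → le x y → y ∈ F) ∧
    (∀ x y : L, x ∈ F → y ∈ F → meet x y ∈ F)

/-- A prime lattice filter: a proper lattice filter such that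
`x ∨ y ∈ F` implies `x ∈ F` or `y ∈ F`. -/
def IsPrimeFilter (F : Set L) : Prop :=
  IsLatticeFilter F ∧ F ≠ Set.univ ∧ ∀ x y : L, join x y ∈ F → x ∈ F ∨ y ∈ F

/-- `F ⊸ G = {z | ∀ a ∉ G, z → a ∉ F}` (intended for `F ⊆ G`). -/
def lolli (F G : Set L) : Set L := {z | ∀ a ∉ G, imp z a ∉ F}

/-- The general `F ⊸ G = (F ∩ G) ⊸ G`. -/
def lolli' (F G : Set L) : Set L := lolli (F ∩ G) G

/-- The kernel `K(F) = {z | ∀ a ∉ F, z → a ∉ F}`. -/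
def ker (F : Set L) : Set L := {z | ∀ a ∉ F, imp z a ∉ F}

/-- `F⁺ = {z | ¬z ∉ F}`. -/
def plus (F : Set L) : Set L := {z | neg z ∉ F}

/-- An implication filter: contains `1` and is closed under modus ponens. -/
def IsImplicationFilter (P : Set L) : Prop :=
  (one : L) ∈ P ∧ ∀ x y : L, x ∈ P → imp x y ∈ P → y ∈ P

/-- `x ~_P y` iff `x → y ∈ P` and `y → x ∈ P`. -/
def simP (P : Set L) (x y : L) : Prop := imp x y ∈ P ∧ imp y x ∈ P

/-- `J_u(F, P) = {z | ∃ f ∈ F, z ~_P f}`. -/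
def Ju (F P : Set L) : Set L := {z | ∃ f ∈ F, simP P z f}

/-- `J_d(F, P) = (J_u(F⁺, P))⁺`. -/
def Jd (F P : Set L) : Set L := plus (Ju (plus F) P)

end MV


namespace MV
variable {L : Type*} [MV L]

lemma neg_add_self' (x : L) : add (neg x) x = one := by
  have h := luk x (one : L)
  have h1 : add (neg x) (one : L) = one := by
    unfold one; exact add_neg_zero _
  have hno : (neg (one : L)) = zero := neg_neg _
  rw [h1, hno] at h
  have h2 : add (zero : L) (one : L) = one := by rw [add_comm]; exact add_zero _
  have h3 : add (zero : L) x = x := by rw [add_comm]; exact add_zero _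
  rw [h2, h3] at h
  exact h.symm

lemma le_join_left (x y : L) : le x (join x y) := by
  unfold le join imp
  rw [add_comm (neg (add (neg x) y)) y, ← add_assoc, add_comm]
  exact neg_add_self' _

end MV

open MV
/-- For prime lattice filters `F ⊆ G`, `F ⊆ J_d(G, K(F))`. -/
theorem stmt_11 {L : Type*} [MV L] (F G : Set L)
    (hF : IsPrimeFilter F) (hG : IsPrimeFilter G) (hFG : F ⊆ G) :
    F ⊆ Jd G (ker F) := by
  intro f hf hmem
  obtain ⟨g, hg, hsim⟩ := hmem
  have hgF : neg g ∉ F := fun h => hg (hFG h)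
  have hnot : imp (imp g (neg f)) (neg g) ∉ F := hsim.2 (neg g) hgF
  apply hnot
  have heq : imp (imp g (neg f)) (neg g) = join f (neg g) := by
    unfold imp join imp
    rw [add_comm (neg g) (neg f)]
  rw [heq]
  exact hF.1.2.1 f _ hf (le_join_left f (neg g))
end

section
/- Let F ⊆ G be prime lattice filters of an MV-algebra L. Then F ⊸ G = J_u(F, K(G)) ⊸ J_d(G, K(F)). -/
open MV
section MVAux

variable {L : Type*} [MV L]

private lemma mv_zero_add (a : L) : MV.add MV.zero a = a := by
  rw [MV.add_comm]; exact MV.add_zero a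

private lemma mv_add_left_comm (a b c : L) :
    MV.add a (MV.add b c) = MV.add b (MV.add a c) := by
  rw [← MV.add_assoc, MV.add_comm a b, MV.add_assoc]

private lemma mv_neg_one : (neg (one : L)) = MV.zero := MV.neg_neg MV.zero

private lemma mv_add_one (a : L) : MV.add a (one : L) = one := MV.add_neg_zero a

private lemma mv_neg_add_self (a : L) : MV.add (neg a) a = one := by
  have h := MV.luk (one : L) a
  rw [mv_neg_one, mv_zero_add, mv_add_one] at h
  exact h

private lemma mv_imp_self (a : L) : imp a a = one := mv_neg_add_self a

private lemma mv_imp_one_left (a : L) : imp (one : L) a = a := by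
  show MV.add (neg one) a = a
  rw [mv_neg_one, mv_zero_add]

private lemma mv_res1 (a b : L) : le (otimes a (imp a b)) b := by
  show MV.add (neg (neg (MV.add (neg a) (neg (MV.add (neg a) b))))) b = one
  rw [MV.neg_neg, MV.add_assoc, MV.luk a b, ← MV.add_assoc,
    MV.add_comm (neg a) (neg (MV.add (neg b) a)), MV.add_assoc,
    mv_neg_add_self, mv_add_one]

private lemma mv_res2 (a b : L) : le a (imp b (otimes b a)) := by
  show MV.add (neg a) (MV.add (neg b) (neg (MV.add (neg b) (neg a)))) = one
  rw [MV.add_comm (neg b) (neg a), MV.add_comm (neg b) (neg (MV.add (neg a) (neg b))),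
    MV.luk a (neg b), MV.neg_neg b, mv_add_left_comm, mv_neg_add_self, mv_add_one]

private lemma mv_le_trans {a b c : L} (h1 : le a b) (h2 : le b c) : le a c := by
  have h1' : MV.add (neg a) b = one := h1
  have h2' : MV.add (neg b) c = one := h2
  have h3 := MV.luk c b
  rw [h2', mv_neg_one, mv_zero_add] at h3
  show MV.add (neg a) c = one
  rw [← h3, mv_add_left_comm, h1', mv_add_one]

private lemma mv_neg_le_neg {a b : L} (h : le a b) : le (neg b) (neg a) := by
  show MV.add (neg (neg b)) (neg a) = one
  rw [MV.neg_neg, MV.add_comm]; exact h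

private lemma mv_add_le_add {a b : L} (c : L) (h : le a b) :
    le (MV.add c a) (MV.add c b) := by
  have h' : MV.add (neg a) b = one := h
  have h3 := MV.luk (neg a) c
  rw [MV.neg_neg] at h3
  show MV.add (neg (MV.add c a)) (MV.add c b) = one
  rw [MV.add_comm c a, ← MV.add_assoc, h3, MV.add_assoc, h', mv_add_one]

private lemma mv_otimes_le_otimes {a b : L} (c : L) (h : le a b) :
    le (otimes c a) (otimes c b) :=
  mv_neg_le_neg (mv_add_le_add (neg c) (mv_neg_le_neg h))

private lemma mv_otimes_comm (a b : L) : otimes a b = otimes b a := by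
  show neg (MV.add (neg a) (neg b)) = neg (MV.add (neg b) (neg a))
  rw [MV.add_comm]

private lemma mv_otimes_le_otimes_left {a b : L} (c : L) (h : le a b) :
    le (otimes a c) (otimes b c) := by
  rw [mv_otimes_comm a c, mv_otimes_comm b c]
  exact mv_otimes_le_otimes c h

private lemma mv_imp_le_imp_left {a b : L} (c : L) (h : le a b) :
    le (imp b c) (imp a c) := by
  have h2 := mv_add_le_add c (mv_neg_le_neg h)
  show le (MV.add (neg b) c) (MV.add (neg a) c)
  rw [MV.add_comm (neg b) c, MV.add_comm (neg a) c]
  exact h2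

private lemma mv_otimes_assoc (a b c : L) :
    otimes (otimes a b) c = otimes a (otimes b c) := by
  show neg (MV.add (neg (neg (MV.add (neg a) (neg b)))) (neg c))
      = neg (MV.add (neg a) (neg (neg (MV.add (neg b) (neg c)))))
  rw [MV.neg_neg, MV.neg_neg, MV.add_assoc]

private lemma mv_imp_otimes (a b c : L) : imp (otimes a b) c = imp a (imp b c) := by
  show MV.add (neg (neg (MV.add (neg a) (neg b)))) c = MV.add (neg a) (MV.add (neg b) c)
  rw [MV.neg_neg, MV.add_assoc]

private lemma mv_imp_swap (a b c : L) : imp a (imp b c) = imp b (imp a c) := by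
  show MV.add (neg a) (MV.add (neg b) c) = MV.add (neg b) (MV.add (neg a) c)
  rw [mv_add_left_comm]

private lemma mv_ker_up {S : Set L} (hup : ∀ x y : L, x ∈ S → le x y → y ∈ S)
    {p p' : L} (hp : p ∈ ker S) (h : le p p') : p' ∈ ker S := by
  intro a ha hmem
  exact hp a ha (hup _ _ hmem (mv_imp_le_imp_left a h))

private lemma mv_absorb {S : Set L} (hup : ∀ x y : L, x ∈ S → le x y → y ∈ S)
    {p x : L} (hp : p ∈ ker S) (hx : x ∈ S) : otimes x p ∈ S := by
  by_contra h
  have h2 : le x (imp p (otimes x p)) := by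
    rw [mv_otimes_comm x p]; exact mv_res2 x p
  exact hp (otimes x p) h (hup _ _ hx h2)

private lemma mv_one_mem_ker (S : Set L) : (one : L) ∈ ker S := by
  intro a ha
  rw [mv_imp_one_left]
  exact ha

end MVAux
/-- For prime lattice filters `F ⊆ G`,
`F ⊸ G = J_u(F, K(G)) ⊸ J_d(G, K(F))`. -/
theorem stmt_13 {L : Type*} [MV L] (F G : Set L)
    (hF : IsPrimeFilter F) (hG : IsPrimeFilter G) (hFG : F ⊆ G) :
    lolli F G = lolli' (Ju F (ker G)) (Jd G (ker F)) := by
  obtain ⟨⟨-, hFup, -⟩, -, -⟩ := hF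
  obtain ⟨⟨-, hGup, -⟩, -, -⟩ := hG
  ext z
  constructor
  · intro hz
    have hz' : ∀ a ∉ G, imp z a ∉ F := hz
    have hzg : ∀ f ∈ F, otimes z f ∈ G := by
      intro f hf
      by_contra hng
      exact hz' _ hng (hFup _ _ hf (mv_res2 f z))
    intro a haB hmem
    obtain ⟨huA, -⟩ := hmem
    obtain ⟨f0, hf0, hxf, hfx⟩ := huA
    have haB' : neg a ∈ Ju (plus G) (ker F) := not_not.mp haB
    obtain ⟨g, hg, hag, hga⟩ := haB'
    have hw : neg g ∉ G := hg
    have haw : imp a (neg g) ∈ ker F := by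
      have he : imp a (neg g) = imp g (neg a) := by
        show MV.add (neg a) (neg g) = MV.add (neg g) (neg a)
        rw [MV.add_comm]
      rw [he]; exact hga
    have hyw : imp (otimes z (imp z a)) (neg g) ∈ ker F :=
      mv_ker_up hFup haw (mv_imp_le_imp_left (neg g) (mv_res1 z a))
    have hf0q : otimes f0 (imp (otimes z (imp z a)) (neg g)) ∈ F :=
      mv_absorb hFup hyw hf0
    have hm : otimes z (otimes f0 (imp (otimes z (imp z a)) (neg g))) ∈ G :=
      hzg _ hf0q
    have hple : le (imp f0 (imp z a)) (imp (otimes z f0) (otimes z (imp z a))) := by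
      show imp (imp f0 (imp z a)) (imp (otimes z f0) (otimes z (imp z a))) = one
      rw [mv_imp_swap (imp f0 (imp z a)) (otimes z f0) (otimes z (imp z a)),
        ← mv_imp_otimes, mv_otimes_assoc]
      exact mv_otimes_le_otimes z (mv_res1 f0 (imp z a))
    have hp : imp (otimes z f0) (otimes z (imp z a)) ∈ ker G :=
      mv_ker_up hGup hfx hple
    have habs : otimes (otimes z (otimes f0 (imp (otimes z (imp z a)) (neg g))))
        (imp (otimes z f0) (otimes z (imp z a))) ∈ G := mv_absorb hGup hp hm
    have heq : otimes (otimes z (otimes f0 (imp (otimes z (imp z a)) (neg g))))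
        (imp (otimes z f0) (otimes z (imp z a)))
        = otimes (otimes (otimes z f0) (imp (otimes z f0) (otimes z (imp z a))))
            (imp (otimes z (imp z a)) (neg g)) := by
      simp only [MV.otimes, MV.neg_neg]
      simp only [MV.add_assoc, MV.add_comm, mv_add_left_comm]
    have hle1 : le (otimes (otimes (otimes z f0) (imp (otimes z f0) (otimes z (imp z a))))
          (imp (otimes z (imp z a)) (neg g)))
        (otimes (otimes z (imp z a)) (imp (otimes z (imp z a)) (neg g))) :=
      mv_otimes_le_otimes_left _ (mv_res1 (otimes z f0) (otimes z (imp z a)))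
    have hle2 : le (otimes (otimes z (imp z a)) (imp (otimes z (imp z a)) (neg g)))
        (neg g) := mv_res1 _ _
    exact hw (hGup _ _ (heq ▸ habs) (mv_le_trans hle1 hle2))
  · intro hz
    have hz' : ∀ a ∉ Jd G (ker F), imp z a ∉ Ju F (ker G) ∩ Jd G (ker F) := hz
    intro c hc hzc
    have hcB : c ∉ Jd G (ker F) := by
      intro hcB
      have h1 : imp (neg c) (neg c) ∈ ker F := by
        rw [mv_imp_self]; exact mv_one_mem_ker F
      exact hcB ⟨neg c, (by show neg (neg c) ∉ G; rw [MV.neg_neg]; exact hc), h1, h1⟩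
    have hA : imp z c ∈ Ju F (ker G) := by
      have h1 : imp (imp z c) (imp z c) ∈ ker G := by
        rw [mv_imp_self]; exact mv_one_mem_ker G
      exact ⟨imp z c, hzc, h1, h1⟩
    have hB : imp z c ∈ Jd G (ker F) := by
      intro hmem
      obtain ⟨g, hg, h1, h2⟩ := hmem
      have hq : imp (imp z c) (neg g) ∈ ker F := by
        have he : imp (imp z c) (neg g) = imp g (neg (imp z c)) := by
          show MV.add (neg (imp z c)) (neg g) = MV.add (neg g) (neg (imp z c))
          rw [MV.add_comm]
        rw [he]; exact h2
      have habs : otimes (imp z c) (imp (imp z c) (neg g)) ∈ F :=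
        mv_absorb hFup hq hzc
      have hgF : neg g ∈ F := hFup _ _ habs (mv_res1 (imp z c) (neg g))
      exact hg (hFG hgF)
    exact hz' c hcB ⟨hA, hB⟩
end

section
/- Let F ⊆ G be prime lattice filters of an MV-algebra L with K(F) = K(G). Then K(F ⊸ G) = K(F). -/
namespace MVAux

open MV

variable {L : Type*} [MV L]

/-! ### Basic arithmetic lemmas -/

lemma add_one (x : L) : add x (one : L) = one := MV.add_neg_zero x

lemma one_add (x : L) : add (one : L) x = one := by
  rw [MV.add_comm]; exact add_one x

lemma zero_add (x : L) : add (zero : L) x = x := by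
  rw [MV.add_comm]; exact MV.add_zero x

lemma neg_one : (neg (one : L)) = zero := by
  show neg (neg zero) = zero
  exact MV.neg_neg zero

lemma add_left_comm (x y z : L) : add x (add y z) = add y (add x z) := by
  rw [← MV.add_assoc, MV.add_comm x y, MV.add_assoc]

/-- `¬x ⊕ x = 1`. -/
lemma neg_add_self (x : L) : add (neg x) x = one := by
  have h := MV.luk x (one : L)
  rw [add_one, neg_one, zero_add] at h
  exact h.symm

lemma add_neg_self (x : L) : add x (neg x) = one := by
  rw [MV.add_comm]; exact neg_add_self x

lemma imp_self (x : L) : imp x x = one := neg_add_self x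

lemma le_refl' (x : L) : le x x := imp_self x

lemma le_one' (x : L) : le x one := add_one (neg x)

lemma zero_le' (x : L) : le zero x := by
  show add (neg zero) x = one
  show add (one) x = one
  exact one_add x

/-- If `x ≤ y` then `y = ¬(¬y ⊕ x) ⊕ x`. -/
lemma eq_of_le (x y : L) (h : le x y) : add (neg (add (neg y) x)) x = y := by
  have hl := MV.luk y x
  -- luk y x : add (neg (add (neg y) x)) x = add (neg (add (neg x) y)) y
  rw [hl]
  have : add (neg x) y = one := h
  rw [this, neg_one, zero_add]

lemma le_trans' {x y z : L} (h1 : le x y) (h2 : le y z) : le x z := by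
  have hz := eq_of_le y z h2
  show add (neg x) z = one
  rw [← hz, add_left_comm]
  have : add (neg x) y = one := h1
  rw [this, add_one]

lemma le_antisymm' {x y : L} (h1 : le x y) (h2 : le y x) : x = y := by
  have := eq_of_le x y h1
  rw [show add (neg y) x = one from h2, neg_one, zero_add] at this
  exact this

lemma eq_one_of_one_le {x : L} (h : le one x) : x = one := by
  have : add (neg (one:L)) x = one := h
  rwa [neg_one, zero_add] at this

lemma add_le_add_left' {x y : L} (w : L) (h : le x y) : le (add w x) (add w y) := by
  have hy := eq_of_le x y h
  show add (neg (add w x)) (add w y) = one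
  rw [← hy]
  calc add (neg (add w x)) (add w (add (neg (add (neg y) x)) x))
      = add (neg (add (neg y) x)) (add (neg (add w x)) (add w x)) := by
        rw [add_left_comm w, add_left_comm (neg (add w x))]
    _ = one := by rw [neg_add_self, add_one]

lemma neg_le_neg' {x y : L} (h : le x y) : le (neg y) (neg x) := by
  show add (neg (neg y)) (neg x) = one
  rw [MV.neg_neg, MV.add_comm]
  exact h

lemma le_add_left (x w : L) : le x (add w x) := by
  show add (neg x) (add w x) = one
  rw [add_left_comm, neg_add_self, add_one]

lemma le_add_right (x w : L) : le x (add x w) := by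
  rw [MV.add_comm]; exact le_add_left x w

end MVAux

namespace MVAux

open MV

variable {L : Type*} [MV L]

/-! ### otimes -/

lemma otimes_comm (x y : L) : otimes x y = otimes y x := by
  unfold otimes; rw [MV.add_comm]

lemma neg_otimes (x y : L) : neg (otimes x y) = add (neg x) (neg y) := by
  unfold otimes; rw [MV.neg_neg]

lemma otimes_assoc (x y z : L) : otimes (otimes x y) z = otimes x (otimes y z) := by
  unfold otimes
  rw [MV.neg_neg, MV.neg_neg, MV.add_assoc]

lemma otimes_one (x : L) : otimes x one = x := by
  unfold otimes
  rw [neg_one, MV.add_zero, MV.neg_neg]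

lemma one_otimes (x : L) : otimes one x = x := by
  rw [otimes_comm]; exact otimes_one x

lemma otimes_le_otimes {x y : L} (w : L) (h : le x y) : le (otimes x w) (otimes y w) := by
  have h1 : le (neg y) (neg x) := neg_le_neg' h
  have h2 : le (add (neg w) (neg y)) (add (neg w) (neg x)) := add_le_add_left' _ h1
  have h3 := neg_le_neg' h2
  show le (neg (add (neg x) (neg w))) (neg (add (neg y) (neg w)))
  rwa [MV.add_comm (neg w), MV.add_comm (neg w)] at h3

/-- Residuation as a term equality (currying). -/
lemma imp_otimes_eq (x y w : L) : imp (otimes x y) w = imp x (imp y w) := by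
  unfold imp otimes
  rw [MV.neg_neg, MV.add_assoc]

/-- `x ⊗ y ≤ w ↔ x ≤ (y → w)`. -/
lemma res_iff (x y w : L) : le (otimes x y) w ↔ le x (imp y w) := by
  unfold le
  rw [show imp (otimes x y) w = imp x (imp y w) from imp_otimes_eq x y w]

lemma otimes_imp_le (x y : L) : le (otimes (imp x y) x) y :=
  (res_iff _ _ _).mpr (le_refl' _)

lemma otimes_imp_le' (x y : L) : le (otimes x (imp x y)) y := by
  rw [otimes_comm]; exact otimes_imp_le x y

lemma le_imp_otimes (x y : L) : le x (imp y (otimes x y)) :=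
  (res_iff _ _ _).mp (le_refl' _)

/-- luk in ⊗ form: `x ⊗ (x→y) = y ⊗ (y→x)`. -/
lemma otimes_imp_comm (x y : L) : otimes x (imp x y) = otimes y (imp y x) := by
  unfold otimes imp
  have h := MV.luk (neg y) (neg x)
  rw [MV.neg_neg, MV.neg_neg] at h
  -- h : add (neg (add y (neg x))) (neg x) = add (neg (add x (neg y))) (neg y)
  rw [MV.add_comm y (neg x), MV.add_comm x (neg y)] at h
  -- h : add (neg (add (neg x) y)) (neg x) = add (neg (add (neg y) x)) (neg y)
  rw [MV.add_comm (neg x) (neg (add (neg x) y)), MV.add_comm (neg y) (neg (add (neg y) x))]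
  rw [h]

/-! ### join -/

lemma join_comm' (x y : L) : join x y = join y x := MV.luk x y

lemma join_eq (x y : L) : join x y = add (otimes x (neg y)) y := by
  unfold join imp otimes
  rw [MV.neg_neg]

lemma le_join_left (x y : L) : le x (join x y) := by
  show add (neg x) (add (neg (add (neg x) y)) y) = one
  rw [add_left_comm, MV.add_comm (neg (add (neg x) y))]
  rw [add_neg_self]

lemma le_join_right (x y : L) : le y (join x y) := by
  show add (neg y) (add (neg (add (neg x) y)) y) = one
  rw [add_left_comm, neg_add_self]
  exact add_one _ -- keep; if goal closed this line unreachable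

lemma imp_join_self (x y : L) : imp (join x y) y = imp x y := by
  show add (neg (add (neg (add (neg x) y)) y)) y = imp x y
  have h := MV.luk (add (neg x) y) y
  rw [h, add_left_comm (neg y) (neg x) y, neg_add_self, add_one, neg_one, zero_add]
  rfl

lemma join_le {x y z : L} (h1 : le x z) (h2 : le y z) : le (join x y) z := by
  have hz := eq_of_le y z h2
  set c := neg (add (neg z) y) with hc
  show add (neg (join x y)) z = one
  rw [← hz, add_left_comm]
  have e1 : add (neg (join x y)) y = imp x y := imp_join_self x y
  rw [e1]
  show add c (add (neg x) y) = one
  calc add c (add (neg x) y) = add (neg x) (add c y) := by rw [add_left_comm]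
    _ = add (neg x) z := by rw [hz]
    _ = one := h1

lemma join_le_join {x y x' y' : L} (h1 : le x x') (h2 : le y y') :
    le (join x y) (join x' y') :=
  join_le (le_trans' h1 (le_join_left x' y')) (le_trans' h2 (le_join_right x' y'))

end MVAux

namespace MVAux

open MV

variable {L : Type*} [MV L]

lemma imp_le_imp_left' {x d : L} (w : L) (h : le x d) : le (imp d w) (imp x w) := by
  rw [← res_iff]
  have h1 : le (otimes (imp d w) x) (otimes (imp d w) d) := by
    rw [otimes_comm (imp d w) x, otimes_comm (imp d w) d]
    exact otimes_le_otimes _ h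
  exact le_trans' h1 (otimes_imp_le d w)

/-- Prelinearity: `(x→y) ∨ (y→x) = 1`. -/
lemma prelinear (x y : L) : join (imp x y) (imp y x) = one := by
  set d := join x y with hd
  have hxd : le x d := le_join_left x y
  have hyd : le y d := le_join_right x y
  -- step 1 : d ⊗ (d→x) = x
  have step1 : otimes d (imp d x) = x := by
    rw [otimes_imp_comm]
    have : imp x d = one := hxd
    rw [this, otimes_one]
  -- step 2 : join (imp d x) (imp d y) = 1
  have step2 : join (imp d x) (imp d y) = one := by
    rw [join_eq]
    have e1 : neg (imp d y) = otimes d (neg y) := by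
      unfold imp otimes; rw [MV.neg_neg]
    rw [e1]
    have e2 : otimes (imp d x) (otimes d (neg y)) = otimes x (neg y) := by
      rw [← otimes_assoc, otimes_comm (imp d x) d, step1]
    rw [e2]
    have e3 : add (otimes x (neg y)) y = d := (join_eq x y).symm
    calc add (otimes x (neg y)) (imp d y)
        = add (otimes x (neg y)) (add (neg d) y) := rfl
      _ = add (neg d) (add (otimes x (neg y)) y) := by rw [add_left_comm]
      _ = add (neg d) d := by rw [e3]
      _ = one := neg_add_self d
  -- step 3
  have h1 : le (imp d y) (imp x y) := imp_le_imp_left' y hxd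
  have h2 : le (imp d x) (imp y x) := imp_le_imp_left' x hyd
  have h3 : le (join (imp d x) (imp d y)) (join (imp y x) (imp x y)) := join_le_join h2 h1
  rw [step2] at h3
  have h4 := eq_one_of_one_le h3
  rw [join_comm'] at h4
  exact h4

lemma meet_le_left (x y : L) : le (meet x y) x := by
  have h := le_join_left (neg x) (neg y)
  have h2 := neg_le_neg' h
  unfold meet
  rwa [MV.neg_neg] at h2

lemma meet_le_right (x y : L) : le (meet x y) y := by
  have h := le_join_right (neg x) (neg y)
  have h2 := neg_le_neg' h
  unfold meet
  rwa [MV.neg_neg] at h2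

/-- `w ⊗ (x ∨ y) ≤ (w⊗x) ∨ (w⊗y)`. -/
lemma otimes_join_le (w x y : L) : le (otimes (join x y) w) (join (otimes x w) (otimes y w)) := by
  rw [res_iff]
  apply join_le
  · rw [← res_iff]; exact le_join_left _ _
  · rw [← res_iff]; exact le_join_right _ _

/-- `f ≤ (f⊗(x→y)) ∨ (f⊗(y→x))`. -/
lemma le_join_otimes_imp (f x y : L) : le f (join (otimes (imp x y) f) (otimes (imp y x) f)) := by
  have h0 : f = otimes (join (imp x y) (imp y x)) f := by
    rw [prelinear, one_otimes]
  have h1 := otimes_join_le f (imp x y) (imp y x)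
  rw [← h0] at h1
  exact h1

end MVAux

namespace MVAux

open MV

variable {L : Type*} [MV L]

section Filters

variable {F G : Set L}

lemma one_mem (hF : IsLatticeFilter F) : (one : L) ∈ F := by
  obtain ⟨⟨w, hw⟩, hup, _⟩ := hF
  exact hup w one hw (le_one' w)

lemma not_mem_of_le {x y : L} (hF : IsLatticeFilter F) (h : le x y) (hy : y ∉ F) : x ∉ F :=
  fun hx => hy (hF.2.1 x y hx h)

/-- ⊗-characterization of the kernel: `z ∈ ker X ↔ ∀ x ∈ X, x ⊗ z ∈ X`,
for upward-closed `X`. -/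
lemma ker_char (hX : ∀ x y : L, x ∈ F → le x y → y ∈ F) (z : L) :
    z ∈ ker F ↔ ∀ x ∈ F, otimes x z ∈ F := by
  constructor
  · intro hz x hx
    by_contra hne
    have h1 : imp z (otimes x z) ∉ F := hz _ hne
    have h2 : le x (imp z (otimes x z)) := le_imp_otimes x z
    exact h1 (hX _ _ hx h2)
  · intro h a ha
    intro himp
    have h1 : otimes (imp z a) z ∈ F := h _ himp
    have h2 : le (otimes (imp z a) z) a := otimes_imp_le z a
    exact ha (hX _ _ h1 h2)

/-- ⊗-characterization of lolli : `z ∈ F ⊸ G ↔ ∀ f ∈ F, f ⊗ z ∈ G`. -/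
lemma lolli_char (hFup : ∀ x y : L, x ∈ F → le x y → y ∈ F)
    (hGup : ∀ x y : L, x ∈ G → le x y → y ∈ G) (z : L) :
    z ∈ lolli F G ↔ ∀ f ∈ F, otimes f z ∈ G := by
  constructor
  · intro hz f hf
    by_contra hne
    have h1 : imp z (otimes f z) ∉ F := hz _ hne
    have h2 : le f (imp z (otimes f z)) := le_imp_otimes f z
    exact h1 (hFup _ _ hf h2)
  · intro h a ha himp
    have h1 : otimes (imp z a) z ∈ G := h _ himp
    have h2 : le (otimes (imp z a) z) a := otimes_imp_le z a
    exact ha (hGup _ _ h1 h2)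

/-- H = lolli F G is upward closed. -/
lemma lolli_up (hFup : ∀ x y : L, x ∈ F → le x y → y ∈ F) :
    ∀ x y : L, x ∈ lolli F G → le x y → y ∈ lolli F G := by
  intro x y hx hxy a ha hy
  have h1 : le (imp y a) (imp x a) := imp_le_imp_left' a hxy
  exact hx a ha (hFup _ _ hy h1)

end Filters

end MVAux

namespace MVAux

open MV

variable {L : Type*} [MV L]

lemma imp_le_imp_otimes (a b w : L) : le (imp a b) (imp (otimes a w) (otimes b w)) := by
  rw [← res_iff]
  have e : otimes (imp a b) (otimes a w) = otimes (otimes (imp a b) a) w := (otimes_assoc _ _ _).symm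
  rw [e]
  exact otimes_le_otimes w (otimes_imp_le a b)

lemma otimes_imp_imp_le (x y z : L) : le (otimes (imp x y) (imp y z)) (imp x z) := by
  rw [← res_iff]
  have e : otimes (otimes (imp x y) (imp y z)) x = otimes (imp y z) (otimes (imp x y) x) := by
    rw [otimes_comm (imp x y) (imp y z), otimes_assoc]
  rw [e]
  have h1 : le (otimes (imp y z) (otimes (imp x y) x)) (otimes (imp y z) y) := by
    rw [otimes_comm (imp y z) (otimes (imp x y) x), otimes_comm (imp y z) y]
    exact otimes_le_otimes _ (otimes_imp_le x y)
  have h2 : le (otimes (imp y z) y) z := by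
    rw [otimes_comm]; exact otimes_imp_le' y z
  exact le_trans' h1 h2

section KerF

variable {F : Set L}

lemma kerF_up (hF : IsPrimeFilter F) {p q : L} (hp : p ∈ ker F) (h : le p q) : q ∈ ker F := by
  rw [ker_char hF.1.2.1] at hp ⊢
  intro x hx
  have h1 : le (otimes x p) (otimes x q) := by
    rw [otimes_comm x p, otimes_comm x q]; exact otimes_le_otimes x h
  exact hF.1.2.1 _ _ (hp x hx) h1

lemma one_mem_kerF (hF : IsPrimeFilter F) : (one : L) ∈ ker F := by
  rw [ker_char hF.1.2.1]
  intro x hx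
  rwa [otimes_one]

lemma kerF_otimes (hF : IsPrimeFilter F) {p q : L} (hp : p ∈ ker F) (hq : q ∈ ker F) : otimes p q ∈ ker F := by
  rw [ker_char hF.1.2.1] at hp hq ⊢
  intro x hx
  rw [← otimes_assoc]
  exact hq _ (hp _ hx)

lemma kerF_trans (hF : IsPrimeFilter F) {x y z : L} (h1 : imp x y ∈ ker F) (h2 : imp y z ∈ ker F) :
    imp x z ∈ ker F :=
  kerF_up hF (kerF_otimes hF h1 h2) (otimes_imp_imp_le x y z)

lemma kerF_compat (hF : IsPrimeFilter F) {a b : L} (w : L) (h : imp a b ∈ ker F) :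
    imp (otimes a w) (otimes b w) ∈ ker F :=
  kerF_up hF h (imp_le_imp_otimes a b w)

/-- Saturation: if `x ∈ F` and `x → y ∈ ker F` then `y ∈ F`. -/
lemma kerF_sat (hF : IsPrimeFilter F) {x y : L} (hx : x ∈ F) (h : imp x y ∈ ker F) : y ∈ F := by
  rw [ker_char hF.1.2.1] at h
  exact hF.1.2.1 _ _ (h x hx) (otimes_imp_le' x y)

/-- Totality of the preorder induced by `ker F`, for prime `F`. -/
lemma kerF_total (hF : IsPrimeFilter F) (x y : L) : imp x y ∈ ker F ∨ imp y x ∈ ker F := by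
  by_cases hxy : imp x y ∈ ker F
  · exact Or.inl hxy
  · right
    rw [ker_char hF.1.2.1] at hxy ⊢
    push_neg at hxy
    obtain ⟨f₁, hf₁, hbad⟩ := hxy
    intro f hf
    have hf' : meet f f₁ ∈ F := hF.1.2.2 f f₁ hf hf₁
    set f' := meet f f₁ with hf'def
    have hj : join (otimes (imp x y) f') (otimes (imp y x) f') ∈ F :=
      hF.1.2.1 _ _ hf' (le_join_otimes_imp f' x y)
    rcases hF.2.2 _ _ hj with h1 | h2
    · exfalso
      have hle : le (otimes (imp x y) f') (otimes f₁ (imp x y)) := by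
        have base := otimes_le_otimes (imp x y) (meet_le_right f f₁)
        rwa [otimes_comm (meet f f₁) (imp x y)] at base
      exact hbad (hF.1.2.1 _ _ h1 hle)
    · have hle : le (otimes (imp y x) f') (otimes f (imp y x)) := by
        have base := otimes_le_otimes (imp y x) (meet_le_left f f₁)
        rwa [otimes_comm (meet f f₁) (imp y x)] at base
      exact hF.1.2.1 _ _ h2 hle

end KerF

end MVAux

namespace MVAux

open MV

variable {L : Type*} [MV L]

lemma otimes_left_comm (x y z : L) : otimes x (otimes y z) = otimes y (otimes x z) := by
  rw [← otimes_assoc, otimes_comm x y, otimes_assoc]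

end MVAux


open MV
open MVAux
/-- For prime lattice filters `F ⊆ G` with `K(F) = K(G)`,
`K(F ⊸ G) = K(F)`. -/
theorem stmt_14 {L : Type*} [MV L] (F G : Set L)
    (hF : IsPrimeFilter F) (hG : IsPrimeFilter G) (hFG : F ⊆ G)
    (hker : ker F = ker G) :
    ker (lolli F G) = ker F := by
  have hFup := hF.1.2.1
  have hGup := hG.1.2.1
  have hHup : ∀ x y : L, x ∈ lolli F G → le x y → y ∈ lolli F G := lolli_up hFup
  apply Set.Subset.antisymm
  · -- hard direction : ker (lolli F G) ⊆ ker F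
    intro z hz
    by_contra hzF
    have hzG : z ∉ ker G := fun h => hzF (by rw [hker]; exact h)
    have hzF' := hzF
    rw [ker_char hFup] at hzF'
    push_neg at hzF'
    obtain ⟨f₀, hf₀, hf₀z⟩ := hzF'
    rw [ker_char hGup] at hzG
    push_neg at hzG
    obtain ⟨g₀, hg₀, hg₀z⟩ := hzG
    -- basic H facts
    have h1H : (one : L) ∈ lolli F G := by
      rw [lolli_char hFup hGup]
      intro f hf
      rw [otimes_one]
      exact hFG hf
    have hzH : z ∈ lolli F G := by
      have := (ker_char hHup z).mp hz one h1H
      rwa [one_otimes] at this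
    have hz2H : otimes z z ∈ lolli F G := (ker_char hHup z).mp hz z hzH
    -- STEP 1 : ∀ f ∈ F, (f₀⊗z) → f ∈ ker F
    have step1 : ∀ f ∈ F, imp (otimes f₀ z) f ∈ ker F := by
      intro f hf
      rcases kerF_total hF f (otimes f₀ z) with h | h
      · exact absurd (kerF_sat hF hf h) hf₀z
      · exact h
    rcases kerF_total hF (otimes f₀ z) g₀ with hβ | hα
    · -- CASE β : (f₀⊗z) → g₀ ∈ ker F
      have hxzG : otimes (otimes f₀ z) z ∈ G := by
        have := (lolli_char hFup hGup _).mp hz2H f₀ hf₀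
        rwa [← otimes_assoc] at this
      have hP : imp (otimes (otimes f₀ z) z) (otimes g₀ z) ∈ ker G := by
        rw [← hker]; exact kerF_compat hF z hβ
      have h2 := (ker_char hGup _).mp hP _ hxzG
      have h3 := otimes_imp_le' (otimes (otimes f₀ z) z) (otimes g₀ z)
      exact hg₀z (hGup _ _ h2 h3)
    · -- CASE α : g₀ → (f₀⊗z) ∈ ker F
      have hstarH : imp (otimes f₀ z) g₀ ∈ lolli F G := by
        rw [lolli_char hFup hGup]
        intro f hf
        have s1 := step1 f hf
        have s2 : imp (otimes (otimes f₀ z) (imp (otimes f₀ z) g₀))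
            (otimes f (imp (otimes f₀ z) g₀)) ∈ ker F :=
          kerF_compat hF _ s1
        have s3 : imp g₀ (otimes (otimes f₀ z) (imp (otimes f₀ z) g₀)) ∈ ker F := by
          rw [otimes_imp_comm (otimes f₀ z) g₀]
          apply kerF_up hF hα
          have h := le_imp_otimes (imp g₀ (otimes f₀ z)) g₀
          rwa [otimes_comm (imp g₀ (otimes f₀ z)) g₀] at h
        have s4 : imp g₀ (otimes f (imp (otimes f₀ z) g₀)) ∈ ker G := by
          rw [← hker]; exact kerF_trans hF s3 s2
        have s6 := (ker_char hGup _).mp s4 _ hg₀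
        exact hGup _ _ s6 (otimes_imp_le' g₀ _)
      have k1 : otimes (imp (otimes f₀ z) g₀) z ∈ lolli F G :=
        (ker_char hHup z).mp hz _ hstarH
      have k2 : otimes (otimes (imp (otimes f₀ z) g₀) z) z ∈ lolli F G :=
        (ker_char hHup z).mp hz _ k1
      have k3 := (lolli_char hFup hGup _).mp k2 f₀ hf₀
      have e : otimes f₀ (otimes (otimes (imp (otimes f₀ z) g₀) z) z)
          = otimes (otimes (otimes f₀ z) (imp (otimes f₀ z) g₀)) z := by
        simp only [otimes_assoc, otimes_left_comm, otimes_comm]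
      rw [e] at k3
      have k4 : le (otimes (otimes (otimes f₀ z) (imp (otimes f₀ z) g₀)) z) (otimes g₀ z) :=
        otimes_le_otimes z (otimes_imp_le' (otimes f₀ z) g₀)
      exact hg₀z (hGup _ _ k3 k4)
  · -- easy direction : ker F ⊆ ker (lolli F G)
    intro y hy
    rw [ker_char hHup]
    intro h hh
    rw [lolli_char hFup hGup]
    intro f hf
    rw [← otimes_assoc]
    have hfh : otimes f h ∈ G := (lolli_char hFup hGup h).mp hh f hf
    have hyG : y ∈ ker G := by rw [← hker]; exact hy
    exact (ker_char hGup y).mp hyG _ hfh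
end
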